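/- arXiv:2209.10244 — 8 statements merged into one kernel-verified Lean document; each statement's English description precedes it below -/
import Mathlib

section
/- (Stability LMI constraints for VIC.) Let A_1, …, A_n be real m×m matrices and suppose there exists a real symmetric positive definite m×m matrix P satisfying A_iᵀ P A_i ⪯ P for every i = 1, …, n. Then the equilibrium x = 0 of the discrete-time polytopic LPV system is stable in the sense of Lyapunov: for every ε > 0 there exists δ > 0 such that every trajectory x of the system with ‖x(0)‖ < δ satisfies ‖x(k)‖ < ε for all k ∈ ℕ. -/
open Matrix BigOperators

/-- The Euclidean norm of a vector in `ℝ^m`. -/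
noncomputable def euclNorm {d : ℕ} (v : Fin d → ℝ) : ℝ :=
  ‖(EuclideanSpace.equiv (Fin d) ℝ).symm v‖

lemma euclNorm_nonneg {d : ℕ} (v : Fin d → ℝ) : 0 ≤ euclNorm v := norm_nonneg _

lemma euclNorm_eq_norm {d : ℕ} (v : Fin d → ℝ) :
    euclNorm v = ‖(WithLp.equiv 2 (Fin d → ℝ)).symm v‖ := rfl

lemma euclNorm_sq {d : ℕ} (v : Fin d → ℝ) : euclNorm v ^ 2 = v ⬝ᵥ v := by
  rw [euclNorm_eq_norm, EuclideanSpace.norm_eq, Real.sq_sqrt (by positivity)]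
  simp [dotProduct, Real.norm_eq_abs, sq_abs, pow_two]

lemma toEuclideanCLM_mulVec {d : ℕ} (M : Matrix (Fin d) (Fin d) ℝ) (v : Fin d → ℝ) :
    (toEuclideanCLM (𝕜 := ℝ) M) ((WithLp.equiv 2 (Fin d → ℝ)).symm v)
      = (WithLp.equiv 2 (Fin d → ℝ)).symm (M *ᵥ v) := by
  rfl

lemma euclNorm_mulVec_le {d : ℕ} (M : Matrix (Fin d) (Fin d) ℝ) (v : Fin d → ℝ) :
    euclNorm (M *ᵥ v) ≤ ‖toEuclideanCLM (𝕜 := ℝ) M‖ * euclNorm v := by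
  rw [euclNorm_eq_norm, euclNorm_eq_norm, ← toEuclideanCLM_mulVec]
  exact (toEuclideanCLM (𝕜 := ℝ) M).le_opNorm _

lemma euclNorm_sum_le {ι : Type*} {d : ℕ} (s : Finset ι) (f : ι → Fin d → ℝ) :
    euclNorm (∑ i ∈ s, f i) ≤ ∑ i ∈ s, euclNorm (f i) := by
  unfold euclNorm
  rw [map_sum]
  exact norm_sum_le _ _

lemma euclNorm_smul {d : ℕ} (c : ℝ) (v : Fin d → ℝ) :
    euclNorm (c • v) = |c| * euclNorm v := by
  unfold euclNorm
  rw [_root_.map_smul, norm_smul, Real.norm_eq_abs]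

/-- Stability LMI constraints for VIC: if there is a symmetric positive definite `P`
with `A iᵀ * P * A i ⪯ P` for every vertex, then the equilibrium `x = 0` of the
discrete-time polytopic LPV system is stable in the sense of Lyapunov. -/
theorem polytopic_lpv_lyapunov_stable {m n : ℕ}
    (A : Fin n → Matrix (Fin m) (Fin m) ℝ)
    (P : Matrix (Fin m) (Fin m) ℝ) (hP : P.PosDef)
    (hLMI : ∀ i, (P - (A i)ᵀ * P * A i).PosSemidef) :
    ∀ ε > 0, ∃ δ > 0, ∀ x : ℕ → Fin m → ℝ,
      (∀ k, ∃ h : Fin n → ℝ, (∀ i, 0 ≤ h i) ∧ (∑ i, h i = 1) ∧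
        x (k + 1) = (∑ i, h i • A i) *ᵥ x k) →
      euclNorm (x 0) < δ → ∀ k, euclNorm (x k) < ε := by
  intro ε hε
  -- the square root of P
  open scoped MatrixOrder in set B := CFC.sqrt P with hB
  have hBB : B * B = P := by open scoped MatrixOrder in exact CFC.sqrt_mul_sqrt_self P hP.posSemidef.nonneg
  have hBT : Bᵀ = B := by
    open scoped MatrixOrder in have h := (CFC.sqrt_nonneg P).posSemidef.1.eq
    ext i j
    have := congrFun (congrFun h i) j
    simpa [conjTranspose_apply] using this
  -- B is invertible
  have hdet : B.det * B.det = P.det := by rw [← det_mul, hBB]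
  have hBunit : IsUnit B.det := by
    refine isUnit_iff_ne_zero.mpr fun h0 => ?_
    rw [h0, mul_zero] at hdet
    exact hP.det_pos.ne' hdet.symm
  have hBinvB : B⁻¹ * B = 1 := nonsing_inv_mul B hBunit
  -- key identity
  have key : ∀ v : Fin m → ℝ, euclNorm (B *ᵥ v) ^ 2 = v ⬝ᵥ P *ᵥ v := by
    intro v
    have hid : v ⬝ᵥ P *ᵥ v = (B *ᵥ v) ⬝ᵥ (B *ᵥ v) := by
      rw [← hBB, ← mulVec_mulVec, dotProduct_mulVec, ← mulVec_transpose, hBT]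
    rw [euclNorm_sq, hid]
  -- per-vertex decrease
  have step1 : ∀ i (v : Fin m → ℝ), euclNorm (B *ᵥ (A i *ᵥ v)) ≤ euclNorm (B *ᵥ v) := by
    intro i v
    have hq := (hLMI i).dotProduct_mulVec_nonneg v
    simp only [star_trivial, sub_mulVec, dotProduct_sub, sub_nonneg] at hq
    have h2 : v ⬝ᵥ ((A i)ᵀ * P * A i) *ᵥ v = (A i *ᵥ v) ⬝ᵥ P *ᵥ (A i *ᵥ v) := by
      rw [← mulVec_mulVec, ← mulVec_mulVec, dotProduct_mulVec, vecMul_transpose]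
    have hsq : euclNorm (B *ᵥ (A i *ᵥ v)) ^ 2 ≤ euclNorm (B *ᵥ v) ^ 2 := by
      rw [key, key, ← h2]; exact hq
    exact (pow_le_pow_iff_left₀ (euclNorm_nonneg _) (euclNorm_nonneg _) (by norm_num)).mp hsq
  -- decrease along convex combinations
  have step2 : ∀ (h : Fin n → ℝ), (∀ i, 0 ≤ h i) → (∑ i, h i = 1) →
      ∀ v : Fin m → ℝ, euclNorm (B *ᵥ ((∑ i, h i • A i) *ᵥ v)) ≤ euclNorm (B *ᵥ v) := by
    intro h h0 h1 v
    have hsum : ∀ (f : Fin n → Matrix (Fin m) (Fin m) ℝ), (∑ i, f i) *ᵥ v = ∑ i, f i *ᵥ v := by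
      intro f
      ext j
      simp only [mulVec, dotProduct, Matrix.sum_apply, Finset.sum_mul, Finset.sum_apply]
      exact Finset.sum_comm
    have hrw : B *ᵥ ((∑ i, h i • A i) *ᵥ v) = ∑ i, h i • (B *ᵥ (A i *ᵥ v)) := by
      rw [hsum, show (∑ i, (h i • A i) *ᵥ v) = ∑ i, h i • (A i *ᵥ v) from
        Finset.sum_congr rfl fun i _ => smul_mulVec _ _ _,
        ← Matrix.mulVecLin_apply, map_sum]
      simp only [_root_.map_smul, Matrix.mulVecLin_apply]
    rw [hrw]
    calc euclNorm (∑ i, h i • (B *ᵥ (A i *ᵥ v)))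
        ≤ ∑ i, euclNorm (h i • (B *ᵥ (A i *ᵥ v))) := euclNorm_sum_le _ _
      _ = ∑ i, h i * euclNorm (B *ᵥ (A i *ᵥ v)) := by
          refine Finset.sum_congr rfl fun i _ => ?_
          rw [euclNorm_smul, abs_of_nonneg (h0 i)]
      _ ≤ ∑ i, h i * euclNorm (B *ᵥ v) := by
          refine Finset.sum_le_sum fun i _ => mul_le_mul_of_nonneg_left (step1 i v) (h0 i)
      _ = euclNorm (B *ᵥ v) := by rw [← Finset.sum_mul, h1, one_mul]
  -- constants
  set c1 := ‖toEuclideanCLM (𝕜 := ℝ) B‖ with hc1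
  set c2 := ‖toEuclideanCLM (𝕜 := ℝ) B⁻¹‖ with hc2
  have hc1n : 0 ≤ c1 := norm_nonneg _
  have hc2n : 0 ≤ c2 := norm_nonneg _
  have hcc : (0:ℝ) < c1 * c2 + 1 :=
    add_pos_of_nonneg_of_pos (mul_nonneg hc1n hc2n) one_pos
  refine ⟨ε / (c1 * c2 + 1), div_pos hε hcc, fun x hx hx0 k => ?_⟩
  -- Lyapunov function non-increasing along trajectory
  have mono : ∀ k, euclNorm (B *ᵥ x k) ≤ euclNorm (B *ᵥ x 0) := by
    intro k
    induction k with
    | zero => exact le_refl _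
    | succ k ih =>
      obtain ⟨h, h0, h1, hstep⟩ := hx k
      rw [hstep]
      exact (step2 h h0 h1 (x k)).trans ih
  have hxk : euclNorm (x k) ≤ c2 * euclNorm (B *ᵥ x k) := by
    have : x k = B⁻¹ *ᵥ (B *ᵥ x k) := by
      rw [mulVec_mulVec, hBinvB, one_mulVec]
    calc euclNorm (x k) = euclNorm (B⁻¹ *ᵥ (B *ᵥ x k)) := by rw [← this]
      _ ≤ c2 * euclNorm (B *ᵥ x k) := euclNorm_mulVec_le _ _
  have hx0b : euclNorm (B *ᵥ x 0) ≤ c1 * euclNorm (x 0) := euclNorm_mulVec_le _ _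
  have chain : euclNorm (x k) ≤ c1 * c2 * euclNorm (x 0) := by
    calc euclNorm (x k) ≤ c2 * euclNorm (B *ᵥ x k) := hxk
      _ ≤ c2 * euclNorm (B *ᵥ x 0) := by
          exact mul_le_mul_of_nonneg_left (mono k) hc2n
      _ ≤ c2 * (c1 * euclNorm (x 0)) := mul_le_mul_of_nonneg_left hx0b hc2n
      _ = c1 * c2 * euclNorm (x 0) := by ring
  have hδpos : 0 < ε / (c1 * c2 + 1) := div_pos hε hcc
  calc euclNorm (x k) ≤ c1 * c2 * euclNorm (x 0) := chain
    _ ≤ c1 * c2 * (ε / (c1 * c2 + 1)) := by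
        exact mul_le_mul_of_nonneg_left hx0.le (mul_nonneg hc1n hc2n)
    _ < (c1 * c2 + 1) * (ε / (c1 * c2 + 1)) := by
        apply mul_lt_mul_of_pos_right _ hδpos
        linarith
    _ = ε := by field_simp
end

section
/- Let A_1, …, A_n be real m×m matrices and P a real symmetric positive definite m×m matrix satisfying A_iᵀ P A_i ⪯ P for every i. Then there exists a constant C > 0, depending only on P, such that every trajectory x of the discrete-time polytopic LPV system satisfies ‖x(k)‖ ≤ C · ‖x(0)‖ for all k ∈ ℕ. -/
open Matrix BigOperators

/-- If the vertex LMIs `A iᵀ * P * A i ⪯ P` hold for a symmetric positive definite `P`,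
then there is a constant `C > 0` such that every trajectory of the discrete-time
polytopic LPV system satisfies `‖x k‖ ≤ C * ‖x 0‖` for all `k`. -/
theorem polytopic_lpv_uniform_bound {m n : ℕ}
    (A : Fin n → Matrix (Fin m) (Fin m) ℝ)
    (P : Matrix (Fin m) (Fin m) ℝ) (hP : P.PosDef)
    (hLMI : ∀ i, (P - (A i)ᵀ * P * A i).PosSemidef) :
    ∃ C > 0, ∀ x : ℕ → Fin m → ℝ,
      (∀ k, ∃ h : Fin n → ℝ, (∀ i, 0 ≤ h i) ∧ (∑ i, h i = 1) ∧
        x (k + 1) = (∑ i, h i • A i) *ᵥ x k) →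
      ∀ k, euclNorm (x k) ≤ C * euclNorm (x 0) := by
  classical
  set S := (open scoped MatrixOrder in CFC.sqrt P) with hSdef
  have hSsd : S.PosSemidef := (open scoped MatrixOrder in (CFC.sqrt_nonneg P).posSemidef)
  have hSS : S * S = P := (open scoped MatrixOrder in CFC.sqrt_mul_sqrt_self P hP.posSemidef.nonneg)
  have hSsymm : Sᵀ = S := by
    have := hSsd.1
    rwa [Matrix.IsHermitian, conjTranspose_eq_transpose_of_trivial] at this
  have hdet : IsUnit S.det := by
    refine isUnit_iff_ne_zero.2 fun h => ?_
    have : P.det = S.det * S.det := by rw [← hSS, det_mul]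
    rw [h, mul_zero] at this
    exact hP.det_pos.ne' this
  have hinv : S⁻¹ * S = 1 := nonsing_inv_mul S hdet
  set e : (Fin m → ℝ) → EuclideanSpace ℝ (Fin m) := fun v => (WithLp.equiv 2 (Fin m → ℝ)).symm v with he
  have hnormsq : ∀ v : Fin m → ℝ, ‖e v‖ ^ 2 = v ⬝ᵥ v := by
    intro v
    rw [← real_inner_self_eq_norm_sq]
    simp [he, PiLp.inner_apply, dotProduct]
    rw [EuclideanSpace.norm_sq_eq]; simp [sq]
  have hEucl : ∀ v : Fin m → ℝ, euclNorm v = ‖e v‖ := fun _ => rfl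
  have hCLM : ∀ (M : Matrix (Fin m) (Fin m) ℝ) (v : Fin m → ℝ),
      toEuclideanCLM (𝕜 := ℝ) M (e v) = e (M *ᵥ v) := by
    intro M v
    simp only [he]
    exact toEuclideanCLM_toLp M v
  -- quadratic form identity
  have hquad : ∀ w : Fin m → ℝ, ‖e (S *ᵥ w)‖ ^ 2 = w ⬝ᵥ (P *ᵥ w) := by
    intro w
    rw [hnormsq, dotProduct_mulVec, ← mulVec_transpose, hSsymm, mulVec_mulVec, hSS,
      dotProduct_comm]
  -- vertex contraction
  have hvertex : ∀ (i : Fin n) (w : Fin m → ℝ), ‖e (S *ᵥ (A i *ᵥ w))‖ ≤ ‖e (S *ᵥ w)‖ := by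
    intro i w
    have h0 := (hLMI i).dotProduct_mulVec_nonneg w
    have hx : star w = w := by funext j; simp
    rw [hx, sub_mulVec, dotProduct_sub] at h0
    have hterm : w ⬝ᵥ (((A i)ᵀ * P * A i) *ᵥ w) = (A i *ᵥ w) ⬝ᵥ (P *ᵥ (A i *ᵥ w)) := by
      rw [Matrix.mul_assoc, ← mulVec_mulVec, dotProduct_mulVec, vecMul_transpose,
        mulVec_mulVec]
    rw [hterm] at h0
    have h1 := hquad (A i *ᵥ w)
    have h2 := hquad w
    nlinarith [norm_nonneg (e (S *ᵥ (A i *ᵥ w))), norm_nonneg (e (S *ᵥ w))]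
  refine ⟨‖toEuclideanCLM (𝕜 := ℝ) S⁻¹‖ * ‖toEuclideanCLM (𝕜 := ℝ) S‖ + 1, by positivity, ?_⟩
  intro x hx k
  have hmono : ∀ k, ‖e (S *ᵥ x k)‖ ≤ ‖e (S *ᵥ x 0)‖ := by
    intro k
    induction k with
    | zero => exact le_refl _
    | succ k ih =>
      obtain ⟨h, hpos, hsum, hstep⟩ := hx k
      have hstep' : x (k + 1) = ∑ i, h i • (A i *ᵥ x k) := by
        rw [hstep]
        induction (Finset.univ : Finset (Fin n)) using Finset.induction with
        | empty => simp
        | insert _ _ hnot ih2 =>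
          rw [Finset.sum_insert hnot, Finset.sum_insert hnot, add_mulVec, ih2,
            Matrix.smul_mulVec]
      have hsv : S *ᵥ x (k + 1) = ∑ i, h i • (S *ᵥ (A i *ᵥ x k)) := by
        rw [hstep', ← Matrix.mulVecLin_apply, map_sum]
        exact Finset.sum_congr rfl fun i _ => by
          rw [_root_.map_smul, Matrix.mulVecLin_apply]
      have hexp : e (S *ᵥ x (k + 1)) = ∑ i, h i • e (S *ᵥ (A i *ᵥ x k)) := by
        rw [hsv]; exact (map_sum (WithLp.linearEquiv 2 ℝ (Fin m → ℝ)).symm _ _).trans (Finset.sum_congr rfl fun i _ => map_smul _ _ _)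
      calc ‖e (S *ᵥ x (k + 1))‖ = ‖∑ i, h i • e (S *ᵥ (A i *ᵥ x k))‖ := by rw [hexp]
        _ ≤ ∑ i, ‖h i • e (S *ᵥ (A i *ᵥ x k))‖ := norm_sum_le _ _
        _ ≤ ∑ i, h i * ‖e (S *ᵥ x k)‖ := by
            refine Finset.sum_le_sum fun i _ => ?_
            rw [norm_smul, Real.norm_eq_abs, abs_of_nonneg (hpos i)]
            exact mul_le_mul_of_nonneg_left (hvertex i (x k)) (hpos i)
        _ = ‖e (S *ᵥ x k)‖ := by rw [← Finset.sum_mul, hsum, one_mul]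
        _ ≤ ‖e (S *ᵥ x 0)‖ := ih
  have hxk : e (x k) = toEuclideanCLM (𝕜 := ℝ) S⁻¹ (e (S *ᵥ x k)) := by
    rw [hCLM, mulVec_mulVec, hinv, one_mulVec]
  have hx0 : e (S *ᵥ x 0) = toEuclideanCLM (𝕜 := ℝ) S (e (x 0)) := (hCLM _ _).symm
  have hb1 : ‖e (x k)‖ ≤ ‖toEuclideanCLM (𝕜 := ℝ) S⁻¹‖ * ‖e (S *ᵥ x k)‖ := by
    rw [hxk]; exact ContinuousLinearMap.le_opNorm _ _
  have hb2 : ‖e (S *ᵥ x 0)‖ ≤ ‖toEuclideanCLM (𝕜 := ℝ) S‖ * ‖e (x 0)‖ := by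
    rw [hx0]; exact ContinuousLinearMap.le_opNorm _ _
  rw [hEucl, hEucl]
  have hn0 : (0:ℝ) ≤ ‖e (x 0)‖ := norm_nonneg _
  nlinarith [hmono k, norm_nonneg (e (S *ᵥ x k)), norm_nonneg (toEuclideanCLM (𝕜 := ℝ) S⁻¹),
    norm_nonneg (toEuclideanCLM (𝕜 := ℝ) S), norm_nonneg (e (x k))]
end

section
/- (Maximum effort LMI constraints for VIC.) Let A_1, …, A_n be real m×m matrices, W_1, …, W_n real p×m matrices, u_max ≥ 0, and P a real symmetric positive definite m×m matrix such that for every i = 1, …, n: (i) A_iᵀ P A_i ⪯ P, and (ii) the block matrix [[u_max²·I_p, W_i], [W_iᵀ, P]] is positive semidefinite. Then every trajectory x of the discrete-time polytopic LPV system (with weights h_i(k)) satisfying x(0)ᵀ P x(0) ≤ 1 obeys the control-effort bound ‖(Σ_i h_i(k) W_i) x(k)‖ ≤ u_max for all k ∈ ℕ. -/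
open Matrix BigOperators

section Aux

variable {ι : Type*} [Fintype ι]

lemma aux_sum_dotProduct {d : ℕ} (v : ι → Fin d → ℝ) (w : Fin d → ℝ) :
    (∑ i, v i) ⬝ᵥ w = ∑ i, v i ⬝ᵥ w := by
  simp [dotProduct, Finset.sum_apply, Finset.sum_mul]
  rw [Finset.sum_comm]

lemma aux_dotProduct_sum {d : ℕ} (w : Fin d → ℝ) (v : ι → Fin d → ℝ) :
    w ⬝ᵥ (∑ i, v i) = ∑ i, w ⬝ᵥ v i := by
  simp [dotProduct, Finset.sum_apply, Finset.mul_sum]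
  rw [Finset.sum_comm]

lemma aux_sum_mulVec {d e : ℕ} (M : ι → Matrix (Fin d) (Fin e) ℝ) (v : Fin e → ℝ) :
    (∑ i, M i) *ᵥ v = ∑ i, M i *ᵥ v := by
  ext j
  simp [Matrix.mulVec, dotProduct, Matrix.sum_apply, Finset.sum_apply, Finset.sum_mul]
  rw [Finset.sum_comm]

lemma aux_mulVec_sum {d e : ℕ} (M : Matrix (Fin d) (Fin e) ℝ) (v : ι → Fin e → ℝ) :
    M *ᵥ (∑ i, v i) = ∑ i, M *ᵥ v i := by
  ext j
  simp [Matrix.mulVec, dotProduct, Finset.sum_apply, Finset.mul_sum]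
  rw [Finset.sum_comm]

lemma aux_quad_nonneg {d : Type*} [Fintype d] {M : Matrix d d ℝ} (hM : M.PosSemidef)
    (v : d → ℝ) : 0 ≤ v ⬝ᵥ M *ᵥ v := by
  have := hM.dotProduct_mulVec_nonneg v
  simpa using this

/-- Jensen-type inequality for the quadratic form of a positive semidefinite symmetric
matrix. -/
lemma aux_jensen {d : ℕ} (P : Matrix (Fin d) (Fin d) ℝ) (hP : P.PosSemidef)
    (hPsym : Pᵀ = P) (h : ι → ℝ) (hh : ∀ i, 0 ≤ h i) (hs : ∑ i, h i = 1)
    (y : ι → Fin d → ℝ) :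
    (∑ i, h i • y i) ⬝ᵥ P *ᵥ (∑ i, h i • y i) ≤ ∑ i, h i * (y i ⬝ᵥ P *ᵥ y i) := by
  set B : (Fin d → ℝ) → (Fin d → ℝ) → ℝ := fun a b => a ⬝ᵥ P *ᵥ b with hB
  have hB_symm : ∀ a b, B a b = B b a := by
    intro a b
    have h1 : a ᵥ* P = P *ᵥ a := by rw [← hPsym, vecMul_transpose, hPsym]
    simp only [hB]
    rw [dotProduct_mulVec, h1, dotProduct_comm]
  have hBnn : ∀ a, 0 ≤ B a a := fun a => aux_quad_nonneg hP a
  have hBl : ∀ w, B (∑ i, h i • y i) w = ∑ i, h i * B (y i) w := by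
    intro w
    simp only [hB]
    rw [aux_sum_dotProduct]
    exact Finset.sum_congr rfl fun i _ => by rw [smul_dotProduct]; simp [smul_eq_mul]
  have hBr : ∀ w, B w (∑ i, h i • y i) = ∑ i, h i * B w (y i) := by
    intro w
    simp only [hB]
    rw [aux_mulVec_sum, aux_dotProduct_sum]
    exact Finset.sum_congr rfl fun i _ => by rw [mulVec_smul, dotProduct_smul]; simp [smul_eq_mul]
  have expand : ∀ a b, B (a - b) (a - b) = B a a + B b b - 2 * B a b := by
    intro a b
    have h1 : ∀ u v w, B (u - v) w = B u w - B v w := by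
      intro u v w; simp only [hB]; rw [sub_dotProduct]
    have h2 : ∀ w u v, B w (u - v) = B w u - B w v := by
      intro w u v; simp only [hB]; rw [mulVec_sub, dotProduct_sub]
    rw [h1, h2, h2, hB_symm b a]; ring
  set S : ℝ := ∑ i, h i * B (y i) (y i) with hS
  set T : ℝ := ∑ i, ∑ j, h i * h j * B (y i) (y j) with hT
  have key : 0 ≤ ∑ i, ∑ j, h i * h j * B (y i - y j) (y i - y j) :=
    Finset.sum_nonneg fun i _ => Finset.sum_nonneg fun j _ =>
      mul_nonneg (mul_nonneg (hh i) (hh j)) (hBnn _)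
  have e1 : ∑ i, ∑ j, h i * h j * B (y i) (y i) = S := by
    refine Finset.sum_congr rfl fun i _ => ?_
    calc ∑ j, h i * h j * B (y i) (y i)
        = ∑ j, h j * (h i * B (y i) (y i)) := Finset.sum_congr rfl fun j _ => by ring
      _ = (∑ j, h j) * (h i * B (y i) (y i)) := (Finset.sum_mul ..).symm
      _ = h i * B (y i) (y i) := by rw [hs, one_mul]
  have e2 : ∑ i, ∑ j, h i * h j * B (y j) (y j) = S := by
    rw [Finset.sum_comm]
    refine Finset.sum_congr rfl fun j _ => ?_
    calc ∑ i, h i * h j * B (y j) (y j)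
        = ∑ i, h i * (h j * B (y j) (y j)) := Finset.sum_congr rfl fun i _ => by ring
      _ = (∑ i, h i) * (h j * B (y j) (y j)) := (Finset.sum_mul ..).symm
      _ = h j * B (y j) (y j) := by rw [hs, one_mul]
  have e3 : B (∑ i, h i • y i) (∑ i, h i • y i) = T := by
    rw [hBl]
    refine Finset.sum_congr rfl fun i _ => ?_
    rw [hBr, Finset.mul_sum]
    exact Finset.sum_congr rfl fun j _ => by ring
  have sum_eq : ∑ i, ∑ j, h i * h j * B (y i - y j) (y i - y j) = 2 * S - 2 * T := by
    calc ∑ i, ∑ j, h i * h j * B (y i - y j) (y i - y j)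
        = ∑ i, ∑ j, (h i * h j * B (y i) (y i) + h i * h j * B (y j) (y j)
            - 2 * (h i * h j * B (y i) (y j))) := by
          refine Finset.sum_congr rfl fun i _ => Finset.sum_congr rfl fun j _ => ?_
          rw [expand]; ring
      _ = (∑ i, ∑ j, h i * h j * B (y i) (y i)) + (∑ i, ∑ j, h i * h j * B (y j) (y j))
            - 2 * T := by
          rw [hT, Finset.mul_sum, ← Finset.sum_add_distrib, ← Finset.sum_sub_distrib]
          refine Finset.sum_congr rfl fun i _ => ?_
          rw [Finset.mul_sum, ← Finset.sum_add_distrib, ← Finset.sum_sub_distrib]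
      _ = 2 * S - 2 * T := by rw [e1, e2]; ring
  rw [sum_eq] at key
  have : B (∑ i, h i • y i) (∑ i, h i • y i) ≤ S := by rw [e3]; linarith
  simpa [hB, hS] using this

end Aux

/-- Maximum effort LMI constraints for VIC: if the vertex LMIs `A iᵀ * P * A i ⪯ P`
and the block LMIs `[[u_max² • I, W i], [W iᵀ, P]] ⪰ 0` hold for a symmetric
positive definite `P`, then every trajectory of the polytopic LPV system starting
in the ellipsoid `{x : xᵀ P x ≤ 1}` obeys the control-effort bound
`‖(∑ i, h k i • W i) x k‖ ≤ u_max` for all `k`. -/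
theorem polytopic_lpv_effort_bound {m n p : ℕ}
    (A : Fin n → Matrix (Fin m) (Fin m) ℝ)
    (W : Fin n → Matrix (Fin p) (Fin m) ℝ)
    (umax : ℝ) (humax : 0 ≤ umax)
    (P : Matrix (Fin m) (Fin m) ℝ) (hP : P.PosDef)
    (hLMI : ∀ i, (P - (A i)ᵀ * P * A i).PosSemidef)
    (hblock : ∀ i,
      (fromBlocks (umax ^ 2 • (1 : Matrix (Fin p) (Fin p) ℝ)) (W i) (W i)ᵀ P).PosSemidef)
    (x : ℕ → Fin m → ℝ) (h : ℕ → Fin n → ℝ)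
    (hh : ∀ k i, 0 ≤ h k i) (hsum : ∀ k, ∑ i, h k i = 1)
    (hdyn : ∀ k, x (k + 1) = (∑ i, h k i • A i) *ᵥ x k)
    (hx0 : x 0 ⬝ᵥ (P *ᵥ x 0) ≤ 1) :
    ∀ k, euclNorm ((∑ i, h k i • W i) *ᵥ x k) ≤ umax := by
  have hPsym : Pᵀ = P := hP.1
  -- Invariance of the ellipsoid
  have hinv : ∀ k, x k ⬝ᵥ P *ᵥ x k ≤ 1 := by
    intro k
    induction k with
    | zero => exact hx0
    | succ k ih =>
      have hx' : x (k + 1) = ∑ i, h k i • (A i *ᵥ x k) := by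
        rw [hdyn k, aux_sum_mulVec]
        exact Finset.sum_congr rfl fun i _ => smul_mulVec ..
      have hjen := aux_jensen P hP.posSemidef hPsym (h k) (hh k) (hsum k)
        (fun i => A i *ᵥ x k)
      have hq : ∀ i, (A i *ᵥ x k) ⬝ᵥ P *ᵥ (A i *ᵥ x k) ≤ x k ⬝ᵥ P *ᵥ x k := by
        intro i
        have h0 := aux_quad_nonneg (hLMI i) (x k)
        have heq : x k ⬝ᵥ (P - (A i)ᵀ * P * A i) *ᵥ x k
            = x k ⬝ᵥ P *ᵥ x k - (A i *ᵥ x k) ⬝ᵥ P *ᵥ (A i *ᵥ x k) := by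
          rw [sub_mulVec, dotProduct_sub]
          congr 1
          rw [← mulVec_mulVec, ← mulVec_mulVec, dotProduct_mulVec (x k) (A i)ᵀ,
            vecMul_transpose]
        linarith [heq ▸ h0]
      calc x (k + 1) ⬝ᵥ P *ᵥ x (k + 1)
          ≤ ∑ i, h k i * ((A i *ᵥ x k) ⬝ᵥ P *ᵥ (A i *ᵥ x k)) := by rw [hx']; exact hjen
        _ ≤ ∑ i, h k i * (x k ⬝ᵥ P *ᵥ x k) :=
            Finset.sum_le_sum fun i _ => mul_le_mul_of_nonneg_left (hq i) (hh k i)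
        _ = x k ⬝ᵥ P *ᵥ x k := by rw [← Finset.sum_mul, hsum k, one_mul]
        _ ≤ 1 := ih
  intro k
  set v : Fin m → ℝ := x k with hv
  set w : Fin p → ℝ := (∑ i, h k i • W i) *ᵥ x k with hwdef
  -- the control vector as a convex combination
  have hw' : ∀ (u : Fin p → ℝ), u ⬝ᵥ w = ∑ i, h k i * (u ⬝ᵥ (W i *ᵥ v)) := by
    intro u
    rw [hwdef, aux_sum_mulVec, aux_dotProduct_sum]
    refine Finset.sum_congr rfl fun i _ => ?_
    rw [smul_mulVec, dotProduct_smul]; simp [smul_eq_mul, hv]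
  -- quadratic inequality from the block LMIs
  have hquad : ∀ (u : Fin p → ℝ) (t : ℝ),
      0 ≤ (umax ^ 2 * (u ⬝ᵥ u)) * (t * t) + (2 * (u ⬝ᵥ w)) * t + v ⬝ᵥ P *ᵥ v := by
    intro u t
    have hper : ∀ i, 0 ≤ (umax ^ 2 * (u ⬝ᵥ u)) * (t * t)
        + (2 * (u ⬝ᵥ (W i *ᵥ v))) * t + v ⬝ᵥ P *ᵥ v := by
      intro i
      have h0 := aux_quad_nonneg (hblock i) (Sum.elim (t • u) v)
      have hcalc : Sum.elim (t • u) v ⬝ᵥ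
          (fromBlocks (umax ^ 2 • (1 : Matrix (Fin p) (Fin p) ℝ)) (W i) (W i)ᵀ P
            *ᵥ Sum.elim (t • u) v)
          = (umax ^ 2 * (u ⬝ᵥ u)) * (t * t) + (2 * (u ⬝ᵥ (W i *ᵥ v))) * t
            + v ⬝ᵥ P *ᵥ v := by
        rw [fromBlocks_mulVec]
        simp only [Sum.elim_comp_inl, Sum.elim_comp_inr]
        rw [sumElim_dotProduct_sumElim, dotProduct_add, dotProduct_add]
        have e1 : (t • u) ⬝ᵥ ((umax ^ 2 • (1 : Matrix (Fin p) (Fin p) ℝ)) *ᵥ (t • u))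
            = (umax ^ 2 * (u ⬝ᵥ u)) * (t * t) := by
          rw [smul_mulVec, one_mulVec]
          simp only [smul_dotProduct, dotProduct_smul, smul_eq_mul]
          ring
        have e2 : (t • u) ⬝ᵥ (W i *ᵥ v) = t * (u ⬝ᵥ (W i *ᵥ v)) := by
          rw [smul_dotProduct]; simp [smul_eq_mul]
        have e3 : v ⬝ᵥ ((W i)ᵀ *ᵥ (t • u)) = t * (u ⬝ᵥ (W i *ᵥ v)) := by
          rw [mulVec_smul, dotProduct_smul, dotProduct_mulVec, vecMul_transpose,
            dotProduct_comm]
          simp [smul_eq_mul]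
        rw [e1, e2, e3]
        ring
      rw [hcalc] at h0
      exact h0
    have hsumineq : 0 ≤ ∑ i, h k i * ((umax ^ 2 * (u ⬝ᵥ u)) * (t * t)
        + (2 * (u ⬝ᵥ (W i *ᵥ v))) * t + v ⬝ᵥ P *ᵥ v) :=
      Finset.sum_nonneg fun i _ => mul_nonneg (hh k i) (hper i)
    calc (0 : ℝ) ≤ ∑ i, h k i * ((umax ^ 2 * (u ⬝ᵥ u)) * (t * t)
          + (2 * (u ⬝ᵥ (W i *ᵥ v))) * t + v ⬝ᵥ P *ᵥ v) := hsumineq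
      _ = (∑ i, h k i) * ((umax ^ 2 * (u ⬝ᵥ u)) * (t * t))
          + (2 * t) * (∑ i, h k i * (u ⬝ᵥ (W i *ᵥ v)))
          + (∑ i, h k i) * (v ⬝ᵥ P *ᵥ v) := by
        rw [Finset.sum_mul, Finset.sum_mul, Finset.mul_sum,
          ← Finset.sum_add_distrib, ← Finset.sum_add_distrib]
        exact Finset.sum_congr rfl fun i _ => by ring
      _ = (umax ^ 2 * (u ⬝ᵥ u)) * (t * t) + (2 * (u ⬝ᵥ w)) * t + v ⬝ᵥ P *ᵥ v := by
        rw [hsum k, hw' u]; ring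
  -- use the discriminant with u := w
  have hdisc := discrim_le_zero (hquad w)
  rw [discrim] at hdisc
  have hwwnn : 0 ≤ w ⬝ᵥ w := Finset.sum_nonneg fun i _ => mul_self_nonneg _
  have hvPv : 0 ≤ v ⬝ᵥ P *ᵥ v := aux_quad_nonneg hP.posSemidef v
  have hvP1 : v ⬝ᵥ P *ᵥ v ≤ 1 := hinv k
  have hww : w ⬝ᵥ w ≤ umax ^ 2 := by
    rcases eq_or_lt_of_le hwwnn with hzero | hpos
    · rw [← hzero]; positivity
    · have h1 : (w ⬝ᵥ w) * (w ⬝ᵥ w) ≤ umax ^ 2 * (w ⬝ᵥ w) := by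
        nlinarith [hdisc, mul_le_mul_of_nonneg_left hvP1
          (mul_nonneg (sq_nonneg umax) hwwnn)]
      exact le_of_mul_le_mul_right h1 hpos
  have hnorm : euclNorm w = Real.sqrt (w ⬝ᵥ w) := by
    simp [euclNorm, EuclideanSpace.norm_eq, dotProduct, Real.norm_eq_abs,
      sq_abs, pow_two]
  rw [hnorm]
  calc Real.sqrt (w ⬝ᵥ w) ≤ Real.sqrt (umax ^ 2) := Real.sqrt_le_sqrt hww
    _ = umax := by rw [Real.sqrt_sq humax]
end

section
/- (Maximum error LMI constraints for VIC.) Let A_1, …, A_n be real m×m matrices, s ∈ ℝ^m a vector (the selection row), Δ ≥ 0, and P a real symmetric positive definite m×m matrix such that for every i = 1, …, n: (i) A_iᵀ P A_i ⪯ P, and (ii) the block matrix [[P, A_iᵀ s], [sᵀ A_i, Δ²]] is positive semidefinite. Then every trajectory x of the discrete-time polytopic LPV system (with weights h_i(k)) satisfying x(0)ᵀ P x(0) ≤ 1 obeys the error bound |sᵀ (Σ_i h_i(k) A_i) x(k)| ≤ Δ for all k ∈ ℕ. -/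
open Matrix BigOperators

lemma dotProduct_sumv {m : ℕ} {k : Type*} (t : Finset k) (u : Fin m → ℝ) (f : k → Fin m → ℝ) :
    u ⬝ᵥ (∑ i ∈ t, f i) = ∑ i ∈ t, u ⬝ᵥ f i := by
  simp [dotProduct, Finset.mul_sum, Finset.sum_apply]
  exact Finset.sum_comm

lemma sumv_dotProduct {m : ℕ} {k : Type*} (t : Finset k) (u : Fin m → ℝ) (f : k → Fin m → ℝ) :
    (∑ i ∈ t, f i) ⬝ᵥ u = ∑ i ∈ t, f i ⬝ᵥ u := by
  simp [dotProduct, Finset.sum_mul, Finset.sum_apply]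
  exact Finset.sum_comm

lemma mulVec_sumv {m : ℕ} {k : Type*} (t : Finset k) (P : Matrix (Fin m) (Fin m) ℝ)
    (f : k → Fin m → ℝ) : P *ᵥ (∑ i ∈ t, f i) = ∑ i ∈ t, P *ᵥ f i := by
  rw [show P *ᵥ (∑ i ∈ t, f i) = P.mulVecLin (∑ i ∈ t, f i) from rfl, map_sum]
  rfl

lemma sumM_mulVec {m : ℕ} {k : Type*} (t : Finset k) (f : k → Matrix (Fin m) (Fin m) ℝ)
    (v : Fin m → ℝ) : (∑ i ∈ t, f i) *ᵥ v = ∑ i ∈ t, f i *ᵥ v := by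
  ext j
  simp only [mulVec, dotProduct, Matrix.sum_apply, Finset.sum_apply, Finset.sum_mul]
  exact Finset.sum_comm

lemma quad_expand {m : ℕ} (P : Matrix (Fin m) (Fin m) ℝ) {k : ℕ} (g : Fin k → ℝ)
    (w : Fin k → Fin m → ℝ) :
    (∑ i, g i • w i) ⬝ᵥ (P *ᵥ ∑ j, g j • w j) = ∑ i, ∑ j, g i * g j * (w i ⬝ᵥ (P *ᵥ w j)) := by
  rw [mulVec_sumv, sumv_dotProduct]
  refine Finset.sum_congr rfl fun i _ => ?_
  rw [smul_dotProduct, dotProduct_sumv, smul_eq_mul, Finset.mul_sum]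
  refine Finset.sum_congr rfl fun j _ => ?_
  rw [mulVec_smul, dotProduct_smul, smul_eq_mul]
  ring

lemma block_quad {m : ℕ} (P : Matrix (Fin m) (Fin m) ℝ) (w u : Fin m → ℝ) (d : ℝ)
    (hM : (fromBlocks P (Matrix.replicateCol (Fin 1) w) (Matrix.replicateRow (Fin 1) u) !![d]).PosSemidef)
    (v : Fin m → ℝ) (t : ℝ) :
    0 ≤ v ⬝ᵥ (P *ᵥ v) + t * (w ⬝ᵥ v) + t * (u ⬝ᵥ v) + d * t ^ 2 := by
  have h := hM.dotProduct_mulVec_nonneg (Sum.elim v (fun _ => t))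
  simp only [star_trivial, fromBlocks_mulVec, Sum.elim_comp_inl, Sum.elim_comp_inr,
    sumElim_dotProduct_sumElim, dotProduct_add] at h
  have h1 : v ⬝ᵥ (Matrix.replicateCol (Fin 1) w *ᵥ fun _ => t) = t * (w ⬝ᵥ v) := by
    simp [mulVec, dotProduct, Finset.mul_sum]
    exact Finset.sum_congr rfl fun i _ => by ring
  have h2 : (fun (_ : Fin 1) => t) ⬝ᵥ (Matrix.replicateRow (Fin 1) u *ᵥ v) = t * (u ⬝ᵥ v) := by
    simp [mulVec, dotProduct]
  have h3 : (fun (_ : Fin 1) => t) ⬝ᵥ (!![d] *ᵥ fun _ => t) = d * t ^ 2 := by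
    simp [mulVec, dotProduct]
    ring
  rw [h1, h2, h3] at h
  linarith

lemma transpose_eq_self_of_posSemidef {m : ℕ} {P : Matrix (Fin m) (Fin m) ℝ}
    (hP : P.PosSemidef) : Pᵀ = P := by
  have h2 : Pᴴ = Pᵀ := by ext i j; simp [conjTranspose_apply]
  rw [← h2, hP.1.eq]

/-- Bilinear bound: for `P` positive semidefinite, if both quadratic forms are `≤ 1`
then the cross term is `≤ 1`. -/
lemma cross_le_one {m : ℕ} {P : Matrix (Fin m) (Fin m) ℝ} (hP : P.PosSemidef)
    {u v : Fin m → ℝ} (hu : u ⬝ᵥ (P *ᵥ u) ≤ 1) (hv : v ⬝ᵥ (P *ᵥ v) ≤ 1) :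
    u ⬝ᵥ (P *ᵥ v) ≤ 1 := by
  have h := hP.dotProduct_mulVec_nonneg (u - v)
  have hsymm : v ⬝ᵥ (P *ᵥ u) = u ⬝ᵥ (P *ᵥ v) := by
    rw [dotProduct_mulVec v P u, ← mulVec_transpose, transpose_eq_self_of_posSemidef hP,
      dotProduct_comm]
  simp only [star_trivial, mulVec_sub, dotProduct_sub, sub_dotProduct] at h
  linarith

/-- Maximum error LMI constraints for VIC: if the vertex LMIs `A iᵀ * P * A i ⪯ P`
and the block LMIs `[[P, A iᵀ s], [sᵀ A i, Δ²]] ⪰ 0` hold for a symmetric positive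
definite `P`, then every trajectory of the polytopic LPV system starting in the
ellipsoid `{x : xᵀ P x ≤ 1}` obeys the error bound `|sᵀ (∑ i, h k i • A i) x k| ≤ Δ`
for all `k`. -/
theorem polytopic_lpv_error_bound {m n : ℕ}
    (A : Fin n → Matrix (Fin m) (Fin m) ℝ)
    (s : Fin m → ℝ) (Δ : ℝ) (hΔ : 0 ≤ Δ)
    (P : Matrix (Fin m) (Fin m) ℝ) (hP : P.PosDef)
    (hLMI : ∀ i, (P - (A i)ᵀ * P * A i).PosSemidef)
    (hblock : ∀ i, (fromBlocks P (Matrix.replicateCol (Fin 1) ((A i)ᵀ *ᵥ s))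
      (Matrix.replicateRow (Fin 1) (s ᵥ* A i)) !![Δ ^ 2]).PosSemidef)
    (x : ℕ → Fin m → ℝ) (h : ℕ → Fin n → ℝ)
    (hh : ∀ k i, 0 ≤ h k i) (hsum : ∀ k, ∑ i, h k i = 1)
    (hdyn : ∀ k, x (k + 1) = (∑ i, h k i • A i) *ᵥ x k)
    (hx0 : x 0 ⬝ᵥ (P *ᵥ x 0) ≤ 1) :
    ∀ k, |s ⬝ᵥ ((∑ i, h k i • A i) *ᵥ x k)| ≤ Δ := by
  -- rewrite convex-combination matrix action as a combination of vertex actions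
  have hcomb : ∀ k, (∑ i, h k i • A i) *ᵥ x k = ∑ i, h k i • (A i *ᵥ x k) := by
    intro k
    rw [sumM_mulVec]
    exact Finset.sum_congr rfl fun i _ => smul_mulVec _ _ _
  -- per-vertex decrease of the Lyapunov function
  have hdec : ∀ i (v : Fin m → ℝ), (A i *ᵥ v) ⬝ᵥ (P *ᵥ (A i *ᵥ v)) ≤ v ⬝ᵥ (P *ᵥ v) := by
    intro i v
    have h2 := (hLMI i).dotProduct_mulVec_nonneg v
    simp only [star_trivial, sub_mulVec, dotProduct_sub] at h2
    have e : v ⬝ᵥ (((A i)ᵀ * P * A i) *ᵥ v) = (A i *ᵥ v) ⬝ᵥ (P *ᵥ (A i *ᵥ v)) := by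
      rw [Matrix.mul_assoc, ← mulVec_mulVec, dotProduct_mulVec v, vecMul_transpose,
        ← mulVec_mulVec]
    linarith
  -- invariance of the ellipsoid
  have hinv : ∀ k, x k ⬝ᵥ (P *ᵥ x k) ≤ 1 := by
    intro k
    induction k with
    | zero => exact hx0
    | succ k ih =>
      rw [hdyn k, hcomb k, quad_expand]
      calc ∑ i, ∑ j, h k i * h k j * ((A i *ᵥ x k) ⬝ᵥ (P *ᵥ (A j *ᵥ x k)))
          ≤ ∑ i, ∑ j, h k i * h k j * 1 := by
            refine Finset.sum_le_sum fun i _ => Finset.sum_le_sum fun j _ => ?_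
            exact mul_le_mul_of_nonneg_left
              (cross_le_one hP.posSemidef (le_trans (hdec i _) ih) (le_trans (hdec j _) ih))
              (mul_nonneg (hh k i) (hh k j))
        _ = 1 := by
            simp only [mul_one, ← Finset.mul_sum, hsum k, one_mul]
  -- per-vertex error bound
  have hvert : ∀ k i, |s ⬝ᵥ (A i *ᵥ x k)| ≤ Δ := by
    intro k i
    set q := x k ⬝ᵥ (P *ᵥ x k) with hqdef
    set c := s ⬝ᵥ (A i *ᵥ x k) with hc
    have hd1 : ((A i)ᵀ *ᵥ s) ⬝ᵥ x k = c := by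
      rw [mulVec_transpose, ← dotProduct_mulVec]
    have hd2 : (s ᵥ* A i) ⬝ᵥ x k = c := by
      rw [← dotProduct_mulVec]
    have hq : ∀ t : ℝ, 0 ≤ q + t * c + t * c + Δ ^ 2 * t ^ 2 := by
      intro t
      have := block_quad P ((A i)ᵀ *ᵥ s) (s ᵥ* A i) (Δ ^ 2) (hblock i) (x k) t
      rw [hd1, hd2] at this
      linarith
    have hq1 : q ≤ 1 := hinv k
    rcases eq_or_lt_of_le hΔ with hΔ0 | hΔpos
    · -- Δ = 0 : show c = 0
      have hc0 : c = 0 := by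
        by_contra hne
        have ht := hq (-(q + 1) / (2 * c))
        have htc : (-(q + 1) / (2 * c)) * c = -(q + 1) / 2 := by
          field_simp
        rw [← hΔ0] at ht
        rw [htc] at ht
        have hqnn : 0 ≤ q := by
          have := (hP.posSemidef).dotProduct_mulVec_nonneg (x k)
          simpa using this
        norm_num at ht
        linarith
      rw [hc0, ← hΔ0]
      simp
    · -- Δ > 0 : c² ≤ Δ² q ≤ Δ²
      have hΔ2 : (0:ℝ) < Δ ^ 2 := by positivity
      have hne : Δ ^ 2 ≠ 0 := hΔ2.ne'
      have ht := hq (-c / Δ ^ 2)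
      have e : q + (-c / Δ ^ 2) * c + (-c / Δ ^ 2) * c + Δ ^ 2 * (-c / Δ ^ 2) ^ 2
          = q - c ^ 2 / Δ ^ 2 := by
        field_simp
        ring
      rw [e] at ht
      have e2 : Δ ^ 2 * (q - c ^ 2 / Δ ^ 2) = Δ ^ 2 * q - c ^ 2 := by
        field_simp
      have hkey : c ^ 2 ≤ Δ ^ 2 := by
        nlinarith [mul_nonneg hΔ2.le ht]
      nlinarith [abs_nonneg c, sq_abs c]
  -- combine
  intro k
  rw [hcomb k, dotProduct_sumv]
  calc |∑ i, s ⬝ᵥ h k i • (A i *ᵥ x k)| ≤ ∑ i, |s ⬝ᵥ h k i • (A i *ᵥ x k)| :=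
        Finset.abs_sum_le_sum_abs _ _
    _ ≤ ∑ i, h k i * Δ := by
        refine Finset.sum_le_sum fun i _ => ?_
        rw [dotProduct_smul, smul_eq_mul, abs_mul, abs_of_nonneg (hh k i)]
        exact mul_le_mul_of_nonneg_left (hvert k i) (hh k i)
    _ = Δ := by rw [← Finset.sum_mul, hsum k, one_mul]
end

section
/- Let A be a real m×m matrix and P a real symmetric positive definite m×m matrix such that P − Aᵀ P A is positive definite. Then every complex eigenvalue z of A (i.e., every root z ∈ ℂ of the characteristic polynomial of A) satisfies |z| < 1. -/
open Matrix Polynomial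

lemma re_dot_map_pos {m : ℕ} {Q : Matrix (Fin m) (Fin m) ℝ} (hQ : Q.PosDef)
    {v : Fin m → ℂ} (hv : v ≠ 0) :
    0 < (star v ⬝ᵥ ((Q.map (algebraMap ℝ ℂ)) *ᵥ v)).re := by
  set x : Fin m → ℝ := fun i => (v i).re with hx
  set y : Fin m → ℝ := fun i => (v i).im with hy
  have key : (star v ⬝ᵥ ((Q.map (algebraMap ℝ ℂ)) *ᵥ v)).re
      = x ⬝ᵥ (Q *ᵥ x) + y ⬝ᵥ (Q *ᵥ y) := by
    simp only [dotProduct, mulVec, Pi.star_apply, map_apply, Complex.re_sum,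
      Finset.mul_sum, ← Finset.sum_add_distrib]
    refine Finset.sum_congr rfl fun i _ => Finset.sum_congr rfl fun j _ => ?_
    simp [Complex.mul_re, Complex.mul_im, hx, hy, Complex.ofReal_re, Complex.ofReal_im]
  rw [key]
  rcases (by
    by_contra h
    push_neg at h
    apply hv
    funext i
    exact Complex.ext (by simpa using congrFun h.1 i) (by simpa using congrFun h.2 i) : x ≠ 0 ∨ y ≠ 0) with h | h
  · have := hQ.dotProduct_mulVec_pos h
    have h2 := hQ.posSemidef.dotProduct_mulVec_nonneg y
    simp only [RCLike.re_to_real, star_trivial] at this h2 ⊢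
    linarith
  · have := hQ.dotProduct_mulVec_pos h
    have h2 := hQ.posSemidef.dotProduct_mulVec_nonneg x
    simp only [RCLike.re_to_real, star_trivial] at this h2 ⊢
    linarith

/-- Strict discrete-time Lyapunov eigenvalue bound: if `P` is symmetric positive
definite and `P − Aᵀ P A` is positive definite, then every complex root of the
characteristic polynomial of `A` lies in the open unit disk. -/
theorem eigenvalues_lt_one_of_strict_lyapunov {m : ℕ}
    (A P : Matrix (Fin m) (Fin m) ℝ) (hP : P.PosDef)
    (hLMI : (P - Aᵀ * P * A).PosDef) :
    ∀ z : ℂ, ((A.charpoly).map (algebraMap ℝ ℂ)).IsRoot z → ‖z‖ < 1 := by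
  intro z hz
  set f := algebraMap ℝ ℂ with hf
  set B := A.map f with hB
  have hz' : (B.charpoly).eval z = 0 := by
    rw [hB, Matrix.charpoly_map A f]
    exact hz
  have hdet : (scalar (Fin m) z - B).det = 0 := by
    rw [Matrix.charpoly, eval_det, matPolyEquiv_charmatrix] at hz'
    simpa using hz'
  obtain ⟨v, hv0, hv⟩ := (Matrix.exists_mulVec_eq_zero_iff).2 hdet
  have hBv : B *ᵥ v = z • v := by
    rw [sub_mulVec] at hv
    have h1 : scalar (Fin m) z *ᵥ v = z • v := by
      funext i
      simp [Matrix.scalar, mulVec_diagonal]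
    rw [h1] at hv
    linear_combination (norm := module) -hv
  have hBH : Bᴴ = Bᵀ := by
    ext i j
    simp [hB, conjTranspose_apply, Matrix.map_apply, hf, Complex.conj_ofReal]
  have hAA : star v ⬝ᵥ ((Bᵀ * P.map f * B) *ᵥ v)
      = ((Complex.normSq z : ℝ) : ℂ) * (star v ⬝ᵥ (P.map f *ᵥ v)) := by
    rw [← mulVec_mulVec, ← mulVec_mulVec, hBv, dotProduct_mulVec, ← hBH, ← star_mulVec, hBv]
    rw [star_smul, smul_dotProduct, mulVec_smul, dotProduct_smul]
    rw [smul_smul, smul_eq_mul]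
    rw [show star z * z = ((Complex.normSq z : ℝ) : ℂ) by
      rw [mul_comm]; simpa using Complex.mul_conj z]
  have hSP := re_dot_map_pos hP hv0
  have hSL := re_dot_map_pos hLMI hv0
  simp only [← hf] at hSP hSL
  have hmap : (P - Aᵀ * P * A).map f = P.map f - Bᵀ * P.map f * B := by
    ext i j
    simp [Matrix.map_apply, Matrix.mul_apply, hB, hf, Finset.mul_sum]
  rw [hmap, sub_mulVec, dotProduct_sub, Complex.sub_re, hAA] at hSL
  rw [Complex.re_ofReal_mul] at hSL
  have habs : ‖z‖ ^ 2 = Complex.normSq z := Complex.sq_norm z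
  have hn : Complex.normSq z < 1 := by nlinarith
  nlinarith [norm_nonneg z, habs, hn]
end

section
/- Let A be a real m×m matrix and P a real symmetric positive definite m×m matrix such that P − Aᵀ P A is positive semidefinite. Then every complex eigenvalue z of A (i.e., every root z ∈ ℂ of the characteristic polynomial of A) satisfies |z| ≤ 1. -/
open Matrix Polynomial
open scoped ComplexOrder

lemma map_psd {m : ℕ} {M : Matrix (Fin m) (Fin m) ℝ} (hM : M.PosSemidef) :
    (M.map (algebraMap ℝ ℂ)).PosSemidef := by
  obtain ⟨B, rfl⟩ : ∃ B : Matrix (Fin m) (Fin m) ℝ, M = Bᴴ * B := by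
    open scoped MatrixOrder in
    exact CStarAlgebra.nonneg_iff_eq_star_mul_self.mp hM.nonneg
  have h1 : (Bᴴ * B).map (algebraMap ℝ ℂ)
      = (B.map (algebraMap ℝ ℂ))ᴴ * (B.map (algebraMap ℝ ℂ)) := by
    rw [Matrix.map_mul]
    congr 1
    ext i j
    simp [Matrix.conjTranspose_apply, Complex.conj_ofReal]
  rw [h1]
  exact Matrix.posSemidef_conjTranspose_mul_self _

lemma conjT_map {m : ℕ} (B : Matrix (Fin m) (Fin m) ℝ) :
    (B.map (algebraMap ℝ ℂ))ᴴ = Bᵀ.map (algebraMap ℝ ℂ) := by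
  ext i j
  simp [Matrix.conjTranspose_apply, Complex.conj_ofReal]

/-- Nonstrict discrete-time Lyapunov eigenvalue bound: if `P` is symmetric positive
definite and `P − Aᵀ P A` is positive semidefinite, then every complex root of the
characteristic polynomial of `A` lies in the closed unit disk. -/
theorem eigenvalues_le_one_of_lyapunov {m : ℕ}
    (A P : Matrix (Fin m) (Fin m) ℝ) (hP : P.PosDef)
    (hLMI : (P - Aᵀ * P * A).PosSemidef) :
    ∀ z : ℂ, ((A.charpoly).map (algebraMap ℝ ℂ)).IsRoot z → ‖z‖ ≤ 1 := by
  intro z hz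
  set f := algebraMap ℝ ℂ with hf
  set Ac := A.map f with hAc
  set Pc := P.map f with hPc
  rw [← Matrix.charpoly_map] at hz
  have hdet : (z • (1 : Matrix (Fin m) (Fin m) ℂ) - Ac).det = 0 := by
    have heq : (Matrix.charmatrix Ac).map (Polynomial.evalRingHom z) = z • 1 - Ac := by
      ext i j
      by_cases h : i = j <;>
        simp [h, Matrix.charmatrix_apply, Matrix.one_apply, Matrix.smul_apply,
          Matrix.sub_apply, Matrix.diagonal_apply]
    have h2 := (RingHom.map_det (Polynomial.evalRingHom z) (Matrix.charmatrix Ac)).symm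
    rw [RingHom.mapMatrix_apply, heq] at h2
    rw [h2]
    simpa [Matrix.charpoly] using hz
  obtain ⟨v, hv, hveq⟩ := Matrix.exists_mulVec_eq_zero_iff.mpr hdet
  have heig : Ac *ᵥ v = z • v := by
    rw [Matrix.sub_mulVec, sub_eq_zero] at hveq
    rw [← hveq, Matrix.smul_mulVec, Matrix.one_mulVec]
  have hPcpsd : Pc.PosSemidef := map_psd hP.posSemidef
  have hPcdet : Pc.det ≠ 0 := by
    have := (RingHom.map_det f P).symm
    rw [RingHom.mapMatrix_apply] at this
    rw [hPc, this]
    simpa [hf] using hP.det_pos.ne'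
  set c := star v ⬝ᵥ Pc *ᵥ v with hc
  have hcpos : 0 < c := by
    refine lt_of_le_of_ne (hPcpsd.dotProduct_mulVec_nonneg v) ?_
    intro h0
    exact hv (Matrix.eq_zero_of_mulVec_eq_zero hPcdet
      ((hPcpsd.dotProduct_mulVec_zero_iff v).mp h0.symm))
  have hLc : ((P - Aᵀ * P * A).map f).PosSemidef := map_psd hLMI
  have hmapeq : (P - Aᵀ * P * A).map f = Pc - Acᴴ * Pc * Ac := by
    rw [hAc, conjT_map, Matrix.map_sub f (map_sub f), Matrix.map_mul, Matrix.map_mul]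
  rw [hmapeq] at hLc
  have hquad := hLc.dotProduct_mulVec_nonneg v
  have hkey : star v ⬝ᵥ (Acᴴ * Pc * Ac) *ᵥ v = (Complex.normSq z : ℂ) * c := by
    rw [← Matrix.mulVec_mulVec, ← Matrix.mulVec_mulVec, heig,
      Matrix.dotProduct_mulVec, Matrix.vecMul_conjTranspose, star_star, heig]
    rw [Matrix.mulVec_smul, star_smul, smul_dotProduct, dotProduct_smul,
      smul_smul, smul_eq_mul, ← hc, Complex.star_def, ← Complex.normSq_eq_conj_mul_self]
  rw [Matrix.sub_mulVec, dotProduct_sub, hkey, ← hc] at hquad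
  obtain ⟨r, hr0, hrc⟩ : ∃ r : ℝ, 0 < r ∧ c = (r : ℂ) := by
    refine ⟨c.re, ?_, ?_⟩
    · rw [Complex.lt_def] at hcpos
      simpa using hcpos.1
    · rw [Complex.lt_def] at hcpos
      exact (Complex.ext rfl (by simpa using hcpos.2.symm))
  have h2 : (0 : ℝ) ≤ (1 - Complex.normSq z) * r := by
    rw [← Complex.real_le_real]
    rw [hrc] at hquad
    push_cast
    convert hquad using 1
    ring
  have hnz : Complex.normSq z ≤ 1 := by nlinarith
  have := Complex.sq_norm z
  nlinarith [norm_nonneg z]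
end

section
/- (D-stability via LMI regions, sufficiency direction.) Let α, β be real q×q matrices with α symmetric, and let A be a real m×m matrix. Suppose there exists a real symmetric positive definite m×m matrix P such that the qm×qm real matrix α ⊗ P + β ⊗ (P·A) + βᵀ ⊗ (Aᵀ·P) is negative definite, where ⊗ denotes the Kronecker product. Then for every complex eigenvalue z of A (every root z ∈ ℂ of the characteristic polynomial of A), the complex q×q Hermitian matrix f(z) = α_ℂ + z·β_ℂ + z̄·(βᵀ)_ℂ is negative definite. -/
open Matrix Polynomial Kronecker ComplexOrder

lemma aux_map_conj {n : Type*} [Fintype n] (M : Matrix n n ℝ) (v : n → ℂ) :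
    (M.map Complex.ofReal) *ᵥ (star v) = star ((M.map Complex.ofReal) *ᵥ v) := by
  ext i
  simp [mulVec, dotProduct, map_sum, Complex.conj_ofReal, mul_comm]

lemma aux_posdef_map {n : Type*} [Fintype n] {M : Matrix n n ℝ} (hM : M.PosDef) :
    (M.map Complex.ofReal).PosDef := by
  have hsym : ∀ i j, M j i = M i j := fun i j => congrFun (congrFun hM.1 i) j
  rw [posDef_iff_dotProduct_mulVec]
  constructor
  · ext i j
    simp [conjTranspose_apply, Complex.conj_ofReal, hsym]
  · intro x hx
    set a : n → ℝ := fun i => (x i).re with ha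
    set b : n → ℝ := fun i => (x i).im with hb
    have key : star x ⬝ᵥ ((M.map Complex.ofReal) *ᵥ x)
        = Complex.ofReal (a ⬝ᵥ (M *ᵥ a) + b ⬝ᵥ (M *ᵥ b)) := by
      apply Complex.ext
      · simp [dotProduct, mulVec, Finset.mul_sum, Complex.add_re, Complex.mul_re,
          Finset.sum_mul, a, b, Finset.sum_add_distrib]
      · have hterm : ∀ i j, ((starRingEnd ℂ) (x i) * ((M i j : ℂ) * x j)).im
            = M i j * ((x i).re * (x j).im) - M i j * ((x i).im * (x j).re) := by
          intro i j
          simp [Complex.mul_im, Complex.mul_re]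
          ring
        simp only [dotProduct, mulVec, map_apply, Pi.star_apply, RCLike.star_def,
          Complex.ofReal_im, Complex.im_sum, Finset.mul_sum, hterm, Finset.sum_sub_distrib]
        rw [sub_eq_zero]
        rw [Finset.sum_comm]
        refine Finset.sum_congr rfl fun i _ => Finset.sum_congr rfl fun j _ => ?_
        rw [hsym i j]
        ring
    rw [key]
    have hab : a ≠ 0 ∨ b ≠ 0 := by
      by_contra h
      push_neg at h
      apply hx
      ext i
      have h1 := congrFun h.1 i
      have h2 := congrFun h.2 i
      simp only [a, b, Pi.zero_apply] at h1 h2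
      exact Complex.ext h1 h2
    have hpos : 0 < a ⬝ᵥ (M *ᵥ a) + b ⬝ᵥ (M *ᵥ b) := by
      rcases hab with h | h
      · have := hM.dotProduct_mulVec_pos h
        have h2 := hM.posSemidef.dotProduct_mulVec_nonneg b
        simp only [star_trivial] at this h2
        linarith
      · have := hM.dotProduct_mulVec_pos h
        have h2 := hM.posSemidef.dotProduct_mulVec_nonneg a
        simp only [star_trivial] at this h2
        linarith
    exact_mod_cast hpos

lemma aux_kron_quad {q m : ℕ} (M : Matrix (Fin q) (Fin q) ℂ) (N : Matrix (Fin m) (Fin m) ℂ)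
    (x : Fin q → ℂ) (v : Fin m → ℂ) :
    star (fun p : Fin q × Fin m => x p.1 * v p.2) ⬝ᵥ
        ((M ⊗ₖ N) *ᵥ fun p : Fin q × Fin m => x p.1 * v p.2)
      = (star x ⬝ᵥ (M *ᵥ x)) * (star v ⬝ᵥ (N *ᵥ v)) := by
  have hw : ∀ p : Fin q × Fin m, ((M ⊗ₖ N) *ᵥ fun p : Fin q × Fin m => x p.1 * v p.2) p
      = (M *ᵥ x) p.1 * (N *ᵥ v) p.2 := by
    rintro ⟨i, j⟩
    simp only [mulVec, dotProduct, kroneckerMap_apply, Fintype.sum_prod_type]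
    rw [Finset.sum_mul_sum]
    exact Finset.sum_congr rfl fun k _ => Finset.sum_congr rfl fun l _ => by ring
  simp only [dotProduct, hw, Pi.star_apply, star_mul']
  rw [Fintype.sum_prod_type, Finset.sum_mul_sum]
  exact Finset.sum_congr rfl fun i _ => Finset.sum_congr rfl fun j _ => by ring

lemma aux_eigen {m : ℕ} (A : Matrix (Fin m) (Fin m) ℝ) (z : ℂ)
    (hz : ((A.charpoly).map (algebraMap ℝ ℂ)).IsRoot z) :
    ∃ v : Fin m → ℂ, v ≠ 0 ∧ (A.map Complex.ofReal) *ᵥ v = z • v := by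
  set B := A.map Complex.ofReal with hB
  have hc : (A.charpoly).map (algebraMap ℝ ℂ) = B.charpoly := by
    rw [hB, show Complex.ofReal = ⇑(algebraMap ℝ ℂ) from rfl,
      Matrix.charpoly_map A (algebraMap ℝ ℂ)]
  rw [hc] at hz
  have hdet : (z • (1 : Matrix (Fin m) (Fin m) ℂ) - B).det = 0 := by
    have h1 : (charmatrix B).map (Polynomial.evalRingHom z)
        = z • (1 : Matrix (Fin m) (Fin m) ℂ) - B := by
      ext i j
      by_cases h : i = j
      · subst h; simp [charmatrix_apply_eq]
      · simp [charmatrix_apply_ne _ _ _ h, Matrix.one_apply_ne h]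
    have h2 := (RingHom.map_det (Polynomial.evalRingHom z) (charmatrix B))
    rw [RingHom.mapMatrix_apply, h1] at h2
    rw [← h2]
    exact hz
  obtain ⟨v, hv0, hv⟩ := Matrix.exists_mulVec_eq_zero_iff.mpr hdet
  refine ⟨v, hv0, ?_⟩
  rw [sub_mulVec, smul_mulVec, one_mulVec, sub_eq_zero] at hv
  exact hv.symm


/-- D-stability via LMI regions (sufficiency): if there is a symmetric positive
definite `P` such that `α ⊗ P + β ⊗ (P·A) + βᵀ ⊗ (Aᵀ·P)` is negative definite,
then for every complex eigenvalue `z` of `A` the Hermitian matrix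
`f(z) = α + z·β + z̄·βᵀ` is negative definite. -/
theorem dstability_of_kronecker_lmi {q m : ℕ}
    (α β : Matrix (Fin q) (Fin q) ℝ) (hα : αᵀ = α)
    (A : Matrix (Fin m) (Fin m) ℝ)
    (P : Matrix (Fin m) (Fin m) ℝ) (hP : P.PosDef)
    (hLMI : (-(α ⊗ₖ P + β ⊗ₖ (P * A) + βᵀ ⊗ₖ (Aᵀ * P))).PosDef) :
    ∀ z : ℂ, ((A.charpoly).map (algebraMap ℝ ℂ)).IsRoot z →
      (-(α.map Complex.ofReal + z • β.map Complex.ofReal +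
        (starRingEnd ℂ z) • (βᵀ.map Complex.ofReal))).PosDef := by
  intro z hz
  obtain ⟨v, hv0, hAv⟩ := aux_eigen A z hz
  have hαs : ∀ i j, α j i = α i j := fun i j => congrFun (congrFun hα i) j
  set αc := α.map Complex.ofReal with hαc
  set βc := β.map Complex.ofReal with hβc
  set Ac := A.map Complex.ofReal with hAc
  set Pc := P.map Complex.ofReal with hPc
  rw [posDef_iff_dotProduct_mulVec]
  constructor
  · ext i j
    simp only [conjTranspose_apply, Matrix.neg_apply, Matrix.add_apply, Matrix.smul_apply, map_apply,
      transpose_apply, smul_eq_mul, star_neg, star_add, star_mul', Complex.conj_ofReal,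
      RingHom.coe_coe, starRingEnd_self_apply, hαc, hβc, αc, βc]
    simp only [RCLike.star_def, Complex.conj_ofReal, Complex.conj_conj]
    rw [hαs i j]
    ring
  · intro x hx
    set w : Fin q × Fin m → ℂ := fun p => x p.1 * v p.2 with hw
    have hw0 : w ≠ 0 := by
      obtain ⟨i, hi⟩ := Function.ne_iff.mp hx
      obtain ⟨j, hj⟩ := Function.ne_iff.mp hv0
      exact Function.ne_iff.mpr ⟨(i, j), mul_ne_zero hi hj⟩
    have hLc := aux_posdef_map hLMI
    have hq := hLc.dotProduct_mulVec_pos hw0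
    have hmap : (-(α ⊗ₖ P + β ⊗ₖ (P * A) + βᵀ ⊗ₖ (Aᵀ * P))).map Complex.ofReal
        = -(αc ⊗ₖ Pc + βc ⊗ₖ (Pc * Ac) + βcᵀ ⊗ₖ (Acᵀ * Pc)) := by
      ext ⟨i, j⟩ ⟨k, l⟩
      simp only [map_apply, Matrix.neg_apply, Matrix.add_apply, kroneckerMap_apply, mul_apply,
        transpose_apply, hαc, hβc, hAc, hPc]
      push_cast
      ring_nf
    rw [hmap] at hq
    -- quadratic form values
    set c := star v ⬝ᵥ (Pc *ᵥ v) with hcdef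
    have hcpos : 0 < c := (aux_posdef_map hP).dotProduct_mulVec_pos hv0
    set sα := star x ⬝ᵥ (αc *ᵥ x) with hsα
    set sβ := star x ⬝ᵥ (βc *ᵥ x) with hsβ
    set sβt := star x ⬝ᵥ (βcᵀ *ᵥ x) with hsβt
    have h1 : star v ⬝ᵥ ((Pc * Ac) *ᵥ v) = z * c := by
      rw [← mulVec_mulVec, hAv, mulVec_smul, dotProduct_smul, smul_eq_mul]
    have h2 : star v ⬝ᵥ ((Acᵀ * Pc) *ᵥ v) = (starRingEnd ℂ z) * c := by
      rw [← mulVec_mulVec, dotProduct_mulVec, vecMul_transpose, aux_map_conj, hAv]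
      rw [star_smul, smul_dotProduct, smul_eq_mul]
      rfl
    have hqval : star w ⬝ᵥ ((-(αc ⊗ₖ Pc + βc ⊗ₖ (Pc * Ac) + βcᵀ ⊗ₖ (Acᵀ * Pc))) *ᵥ w)
        = -(sα + z * sβ + (starRingEnd ℂ z) * sβt) * c := by
      rw [neg_mulVec, dotProduct_neg, add_mulVec, add_mulVec, dotProduct_add, dotProduct_add,
        hw, aux_kron_quad, aux_kron_quad, aux_kron_quad, h1, h2, ← hsα, ← hsβ, ← hsβt, ← hcdef]
      ring
    rw [hqval] at hq
    have hgoal : star x ⬝ᵥ ((-(αc + z • βc + (starRingEnd ℂ z) • βcᵀ)) *ᵥ x)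
        = -(sα + z * sβ + (starRingEnd ℂ z) * sβt) := by
      rw [neg_mulVec, dotProduct_neg, add_mulVec, add_mulVec, dotProduct_add, dotProduct_add,
        smul_mulVec, smul_mulVec, dotProduct_smul, dotProduct_smul,
        smul_eq_mul, smul_eq_mul, ← hsα, ← hsβ, ← hsβt]
    have : (βᵀ).map Complex.ofReal = βcᵀ := by ext i j; simp [hβc, map_apply]
    rw [this, hgoal]
    -- from 0 < s * c and 0 < c conclude 0 < s
    set s := -(sα + z * sβ + (starRingEnd ℂ z) * sβt) with hs
    have him : c.im = 0 := (Complex.lt_def.mp hcpos).2.symm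
    have hre : 0 < c.re := by simpa using (Complex.lt_def.mp hcpos).1
    have hceq : c = (c.re : ℂ) := Complex.ext rfl (by simp [him])
    have hcne : c.re ≠ 0 := ne_of_gt hre
    have : s = (s * c) * ((c.re⁻¹ : ℝ) : ℂ) := by
      rw [hceq]
      push_cast
      rw [Complex.ofReal_re]
      field_simp
    rw [this]
    have hinv : (0 : ℂ) < ((c.re⁻¹ : ℝ) : ℂ) := by
      rw [Complex.lt_def]
      constructor
      · simpa using inv_pos.mpr hre
      · simp
    exact mul_pos hq hinv
end

section
/- Let γ ∈ (0, π/2). Define the real 2×2 matrices α_v = −2·sin(γ)·I₂ and β_v = [[sin(γ), cos(γ)], [−cos(γ), sin(γ)]]. Then for every z ∈ ℂ, the complex 2×2 Hermitian matrix f(z) = α_v + z·β_v + z̄·β_vᵀ (with real matrices regarded as complex entrywise) is negative definite if and only if Re z < 1 and cos(γ)·|Im z| < sin(γ)·(1 − Re z), i.e., if and only if z lies strictly inside the conic sector with apex at 1 opening towards the left with half-angle γ. -/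
open Matrix ComplexOrder Real

lemma posDef_fin_two_iff (A : ℝ) (b : ℂ) :
    (!![(A:ℂ), b; (starRingEnd ℂ) b, (A:ℂ)]).PosDef ↔ ‖b‖ < A := by
  constructor
  · intro hP
    obtain ⟨-, h⟩ := posDef_iff_dotProduct_mulVec.mp hP
    rcases eq_or_ne b 0 with hb | hb
    · have h1 := h (x := ![1, 0]) (by intro hc; have := congrFun hc 0; simp at this)
      simp [dotProduct, mulVec, Fin.sum_univ_two, hb] at h1
      simpa [hb] using h1
    · have h1 := h (x := ![-b, (‖b‖ : ℂ)])
        (by intro hc; have := congrFun hc 0; simp at this; exact hb this)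
      have hsq : b.re ^ 2 + b.im ^ 2 = ‖b‖ ^ 2 := by
        rw [Complex.sq_norm, Complex.normSq_apply]; ring
      have hq : ((star ![-b, (‖b‖ : ℂ)]) ⬝ᵥ
          (!![(A:ℂ), b; (starRingEnd ℂ) b, (A:ℂ)] *ᵥ ![-b, (‖b‖ : ℂ)])) =
          ((2 * ‖b‖ ^ 2 * (A - ‖b‖) : ℝ) : ℂ) := by
        simp [dotProduct, mulVec, Fin.sum_univ_two, Complex.ext_iff]
        simp only [← Complex.ofReal_pow, Complex.ofReal_re, Complex.ofReal_im]
        constructor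
        · linear_combination (A - 2 * ‖b‖) * hsq
        · ring
      rw [hq, Complex.zero_lt_real] at h1
      have hb' : 0 < ‖b‖ := norm_pos_iff.mpr hb
      nlinarith
  · intro hlt
    have hb0 : 0 ≤ ‖b‖ := norm_nonneg b
    refine posDef_iff_dotProduct_mulVec.mpr ⟨?_, ?_⟩
    · ext i j
      fin_cases i <;> fin_cases j <;>
        simp [Matrix.conjTranspose_apply]
    · intro v hv
      have hq : ((star v) ⬝ᵥ (!![(A:ℂ), b; (starRingEnd ℂ) b, (A:ℂ)] *ᵥ v)) =
          ((A * (Complex.normSq (v 0) + Complex.normSq (v 1))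
            + 2 * ((starRingEnd ℂ) (v 0) * b * v 1).re : ℝ) : ℂ) := by
        simp [dotProduct, mulVec, Fin.sum_univ_two, Complex.ext_iff, Complex.normSq_apply]
        constructor <;> ring
      rw [hq, Complex.zero_lt_real]
      have habs : |((starRingEnd ℂ) (v 0) * b * v 1).re| ≤
          ‖b‖ * ‖(v 0)‖ * ‖(v 1)‖ := by
        refine (Complex.abs_re_le_norm _).trans (le_of_eq ?_)
        rw [norm_mul, norm_mul, Complex.norm_conj]; ring
      have hre : -(‖b‖ * ‖(v 0)‖ * ‖(v 1)‖) ≤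
          ((starRingEnd ℂ) (v 0) * b * v 1).re := by
        have := neg_abs_le ((starRingEnd ℂ) (v 0) * b * v 1).re
        linarith [abs_le.mp (le_refl |((starRingEnd ℂ) (v 0) * b * v 1).re|)]
      have hn0 : Complex.normSq (v 0) = ‖(v 0)‖ ^ 2 := by
        rw [Complex.sq_norm]
      have hn1 : Complex.normSq (v 1) = ‖(v 1)‖ ^ 2 := by
        rw [Complex.sq_norm]
      have hvpos : 0 < ‖(v 0)‖ ^ 2 + ‖(v 1)‖ ^ 2 := by
        rcases Function.ne_iff.mp hv with ⟨i, hi⟩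
        have hi' : v i ≠ 0 := by simpa using hi
        have : 0 < ‖(v 0)‖ ∨ 0 < ‖(v 1)‖ := by
          fin_cases i
          exacts [Or.inl (norm_pos_iff.mpr hi'), Or.inr (norm_pos_iff.mpr hi')]
        rcases this with h0 | h0 <;>
          nlinarith [norm_nonneg (v 0), norm_nonneg (v 1)]
      rw [hn0, hn1]
      nlinarith [sq_nonneg (‖(v 0)‖ - ‖(v 1)‖),
        norm_nonneg (v 0), norm_nonneg (v 1)]

/-- The conic-sector LMI region: for `γ ∈ (0, π/2)`,
`α_v = −2·sin(γ)·I₂` and `β_v = [[sin γ, cos γ], [−cos γ, sin γ]]`, the Hermitian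
matrix `f(z) = α_v + z·β_v + z̄·β_vᵀ` is negative definite iff `z` lies strictly
inside the conic sector with apex at `1` opening towards the left with
half-angle `γ`. -/
theorem conic_sector_lmi_region_iff (γ : ℝ) (hγ0 : 0 < γ) (hγ1 : γ < π / 2)
    (z : ℂ) :
    (-(((-2 * Real.sin γ) • (1 : Matrix (Fin 2) (Fin 2) ℝ)).map Complex.ofReal +
        z • ((!![Real.sin γ, Real.cos γ; -Real.cos γ, Real.sin γ]).map Complex.ofReal) +
        (starRingEnd ℂ z) •
          (((!![Real.sin γ, Real.cos γ; -Real.cos γ, Real.sin γ])ᵀ).map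
            Complex.ofReal))).PosDef ↔
      z.re < 1 ∧ Real.cos γ * |z.im| < Real.sin γ * (1 - z.re) := by
  have hs : 0 < Real.sin γ := Real.sin_pos_of_pos_of_lt_pi hγ0 (by linarith [Real.pi_gt_three])
  have hc : 0 < Real.cos γ := Real.cos_pos_of_mem_Ioo ⟨by linarith [Real.pi_gt_three], hγ1⟩
  set A : ℝ := 2 * Real.sin γ * (1 - z.re) with hA
  set b : ℂ := (-2 * Real.cos γ * z.im : ℝ) * Complex.I with hb
  have hM : (-(((-2 * Real.sin γ) • (1 : Matrix (Fin 2) (Fin 2) ℝ)).map Complex.ofReal +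
        z • ((!![Real.sin γ, Real.cos γ; -Real.cos γ, Real.sin γ]).map Complex.ofReal) +
        (starRingEnd ℂ z) •
          (((!![Real.sin γ, Real.cos γ; -Real.cos γ, Real.sin γ])ᵀ).map
            Complex.ofReal))) = !![(A:ℂ), b; (starRingEnd ℂ) b, (A:ℂ)] := by
    ext i j
    fin_cases i <;> fin_cases j <;>
      simp [Matrix.one_apply, hA, hb, Complex.ext_iff, Matrix.transpose_apply,
        Complex.cos_ofReal_re, Complex.sin_ofReal_re, Matrix.vecHead, Matrix.vecTail] <;> ring
  rw [hM, posDef_fin_two_iff]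
  have habs : ‖b‖ = 2 * Real.cos γ * |z.im| := by
    rw [hb, norm_mul, Complex.norm_I, Complex.norm_real, Real.norm_eq_abs, mul_one,
      abs_mul, abs_mul, abs_of_pos hc]
    norm_num
  rw [habs, hA]
  constructor
  · intro h
    have him : 0 ≤ 2 * Real.cos γ * |z.im| := by positivity
    have h1 : z.re < 1 := by nlinarith
    exact ⟨h1, by nlinarith⟩
  · rintro ⟨h1, h2⟩
    nlinarith [abs_nonneg z.im]
end
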